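/- Let γ ∈ ℝ and σ > 0, and let φ be a solution of the DNLS lattice with power nonlinearity on [0,T_f]. Then the ℓ²-norm is conserved: ‖φ(t)‖_{ℓ²} = ‖φ(0)‖_{ℓ²} for all t ∈ [0,T_f]. -/

import Mathlib

noncomputable section

open Set

/-- The sequence space ℓ²(ℤ,ℂ). -/
abbrev Seq2 := lp (fun _ : ℤ => ℂ) 2


/-- `φ` is a solution of the DNLS lattice with power nonlinearity on `[0,Tf]`:
a continuously differentiable curve into ℓ²(ℤ,ℂ) satisfying
`i dφ_n/dt = (φ_{n+1} − 2φ_n + φ_{n−1}) + γ|φ_n|^{2σ}φ_n` componentwise. -/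
def IsDNLSSolution (γ σ Tf : ℝ) (φ : ℝ → Seq2) : Prop :=
  ∃ φdot : ℝ → Seq2, ContinuousOn φdot (Icc 0 Tf) ∧
    ∀ t ∈ Icc (0:ℝ) Tf,
      HasDerivWithinAt φ (φdot t) (Icc 0 Tf) t ∧
      ∀ n : ℤ, Complex.I * φdot t n =
        (φ t (n+1) - 2 * φ t n + φ t (n-1))
          + (γ : ℂ) * (‖φ t n‖ ^ (2*σ) : ℝ) * φ t n

/-- Pointwise algebra: the real part of `conj a * dd` for the DNLS vector field. -/
private lemma dnls_pointwise (a p q dd : ℂ) (c : ℝ)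
    (h : Complex.I * dd = p - 2*a + q + (c:ℂ)*a) :
    ((starRingEnd ℂ) a * dd).re
      = ((starRingEnd ℂ) a * p).im + ((starRingEnd ℂ) a * q).im := by
  simp only [Complex.ext_iff, Complex.mul_re, Complex.mul_im, Complex.I_re, Complex.I_im,
    Complex.sub_re, Complex.sub_im, Complex.add_re, Complex.add_im, Complex.ofReal_re,
    Complex.ofReal_im, Complex.conj_re, Complex.conj_im, Complex.re_ofNat,
    Complex.im_ofNat] at h ⊢
  obtain ⟨h1, h2⟩ := h
  linear_combination a.re * h2 - a.im * h1

private lemma conj_mul_im_swap (a b : ℂ) :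
    ((starRingEnd ℂ) a * b).im = -((starRingEnd ℂ) b * a).im := by
  simp [Complex.mul_im]; ring

/-- The key cancellation: `re ⟪u, d⟫ = 0` for the DNLS vector field. -/
private lemma dnls_re_inner_eq_zero (γ σ : ℝ) (u d : Seq2)
    (heq : ∀ n : ℤ, Complex.I * d n =
      (u (n+1) - 2 * u n + u (n-1))
        + (γ : ℂ) * (‖u n‖ ^ (2*σ) : ℝ) * u n) :
    Complex.re (inner ℂ u d) = 0 := by
  set g : ℤ → ℝ := fun n => ((starRingEnd ℂ) (u n) * u (n+1)).im with hgdef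
  -- summability of `‖u n‖ ^ 2`
  have hsum2 : Summable fun n : ℤ => ‖u n‖ ^ 2 := by
    have h1 := (lp.memℓp u).summable (p := 2) (by norm_num)
    have h2 : ∀ n : ℤ, ‖u n‖ ^ ((2 : ENNReal).toReal) = ‖u n‖ ^ 2 := by
      intro n
      rw [show ((2 : ENNReal).toReal) = ((2 : ℕ) : ℝ) by norm_num, Real.rpow_natCast]
    exact h1.congr h2
  have hsum2' : Summable fun n : ℤ => ‖u (n+1)‖ ^ 2 := by
    have h := (Equiv.addRight (1:ℤ)).summable_iff.2 hsum2
    exact h.congr fun n => by simp [Equiv.coe_addRight, Function.comp]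
  -- summability of `g`
  have hgsum : Summable g := by
    refine Summable.of_norm_bounded
      (g := fun n => (‖u n‖ ^ 2 + ‖u (n+1)‖ ^ 2) / 2) ((hsum2.add hsum2').div_const 2) ?_
    intro n
    have h1 : ‖g n‖ ≤ ‖u n‖ * ‖u (n+1)‖ := by
      have := Complex.abs_im_le_norm ((starRingEnd ℂ) (u n) * u (n+1))
      simpa [hgdef, Real.norm_eq_abs, map_mul] using this
    nlinarith [sq_nonneg (‖u n‖ - ‖u (n+1)‖)]
  have hgsum' : Summable fun n : ℤ => g (n-1) := by
    have h := (Equiv.subRight (1:ℤ)).summable_iff.2 hgsum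
    exact h.congr fun n => by simp [Equiv.subRight_apply, Function.comp]
  -- termwise identity
  have hterm : ∀ n : ℤ, Complex.re (inner ℂ (u n) (d n)) = g n - g (n-1) := by
    intro n
    have heqn := heq n
    have hcast : (γ : ℂ) * (‖u n‖ ^ (2*σ) : ℝ) * (u n)
        = ((γ * ‖u n‖ ^ (2*σ) : ℝ) : ℂ) * u n := by
      push_cast; ring
    rw [hcast] at heqn
    have := dnls_pointwise (u n) (u (n+1)) (u (n-1)) (d n)
      (γ * ‖u n‖ ^ (2*σ)) heqn
    rw [RCLike.inner_apply', this, conj_mul_im_swap (u n) (u (n-1))]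
    have hn : (n - 1) + 1 = n := by ring
    simp only [hgdef, hn]
    ring
  -- sum up
  calc Complex.re (inner ℂ u d)
      = ∑' n : ℤ, Complex.re (inner ℂ (u n) (d n)) := by
        rw [lp.inner_eq_tsum]
        exact Complex.reCLM.map_tsum (lp.summable_inner u d)
    _ = ∑' n : ℤ, (g n - g (n-1)) := tsum_congr hterm
    _ = (∑' n : ℤ, g n) - (∑' n : ℤ, g (n-1)) := Summable.tsum_sub hgsum hgsum'
    _ = 0 := by
        have h : ∑' n : ℤ, g (n-1) = ∑' n : ℤ, g n := by
          have := (Equiv.subRight (1:ℤ)).tsum_eq g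
          simpa [Equiv.subRight_apply] using this
        rw [h, sub_self]

/-- Conservation of the ℓ²-norm along solutions of the DNLS lattice with power
nonlinearity: `‖φ(t)‖ = ‖φ(0)‖` for all `t ∈ [0,Tf]`. -/
theorem dnls_l2_norm_conserved (γ σ Tf : ℝ) (hσ : 0 < σ)
    (φ : ℝ → Seq2) (hφ : IsDNLSSolution γ σ Tf φ) :
    ∀ t ∈ Icc (0:ℝ) Tf, ‖φ t‖ = ‖φ 0‖ := by
  obtain ⟨φd, hcont, hsol⟩ := hφ
  set F : ℝ → ℝ := fun t => Complex.re (inner ℂ (φ t) (φ t)) with hFdef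
  have hFnorm : ∀ t, F t = ‖φ t‖ ^ 2 := fun t =>
    (norm_sq_eq_re_inner (𝕜 := ℂ) (φ t)).symm
  have hφcont : ContinuousOn φ (Icc 0 Tf) := fun t ht =>
    ((hsol t ht).1).continuousWithinAt
  have hFcont : ContinuousOn F (Icc 0 Tf) :=
    Complex.continuous_re.comp_continuousOn (hφcont.inner hφcont)
  have hderiv : ∀ x ∈ Ico (0:ℝ) Tf, HasDerivWithinAt F 0 (Ici x) x := by
    intro x hx
    have hx' : x ∈ Icc (0:ℝ) Tf := ⟨hx.1, le_of_lt hx.2⟩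
    have hmem : Icc (0:ℝ) Tf ∈ nhdsWithin x (Ici x) := by
      rw [mem_nhdsWithin]
      exact ⟨Iio Tf, isOpen_Iio, hx.2,
        fun y hy => ⟨le_trans hx.1 hy.2, le_of_lt hy.1⟩⟩
    have h1 : HasDerivWithinAt φ (φd x) (Ici x) x :=
      (hsol x hx').1.mono_of_mem_nhdsWithin hmem
    have hd := h1.inner ℂ h1
    have hzero : Complex.re ((inner ℂ (φ x) (φd x)) + (inner ℂ (φd x) (φ x))) = 0 := by
      have hkey := dnls_re_inner_eq_zero γ σ (φ x) (φd x) (hsol x hx').2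
      have h2 : (inner ℂ (φd x) (φ x)).re = 0 := by
        rw [← inner_conj_symm (φd x) (φ x), Complex.conj_re, hkey]
      rw [Complex.add_re, hkey, h2, add_zero]
    have := Complex.reCLM.hasFDerivAt.comp_hasDerivWithinAt x hd
    simpa [hFdef, hzero, Function.comp_def, Complex.reCLM_apply] using this
  have hconst := constant_of_has_deriv_right_zero hFcont hderiv
  intro t ht
  have h := hconst t ht
  rw [hFnorm, hFnorm] at h
  calc ‖φ t‖ = Real.sqrt (‖φ t‖ ^ 2) := (Real.sqrt_sq (norm_nonneg _)).symm
    _ = Real.sqrt (‖φ 0‖ ^ 2) := by rw [h]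
    _ = ‖φ 0‖ := Real.sqrt_sq (norm_nonneg _)
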